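/- Let R be a commutative local ring and let d₁, …, dₙ ∈ R be elements such that dᵢ − dⱼ is a unit of R for all i ≠ j. Let M ∈ Mₙ(R) be a matrix whose characteristic polynomial equals ∏ᵢ (X − dᵢ). Then there exists γ ∈ GLₙ(R) with γ⁻¹·M·γ = diag(d₁, …, dₙ). -/

import Mathlib

open Matrix Polynomial

private lemma aeval_mulVec_eigen {K : Type*} [CommRing K] {n : ℕ}
    (N : Matrix (Fin n) (Fin n) K) (v : Fin n → K)
    (a : K) (h : N *ᵥ v = a • v) (q : K[X]) : (aeval N q) *ᵥ v = q.eval a • v := by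
  induction q using Polynomial.induction_on with
  | C c => simp [aeval_C, Matrix.smul_mulVec, Algebra.algebraMap_eq_smul_one]
  | add p q hp hq => simp [Matrix.add_mulVec, hp, hq, add_smul]
  | monomial m c hm =>
      rw [_root_.map_mul (aeval N), map_pow, aeval_X, pow_succ, ← mul_assoc,
        ← Matrix.mulVec_mulVec, h, Matrix.mulVec_smul]
      have h2 : (aeval N) (C c) * N ^ m = aeval N (C c * X ^ m) := by
        rw [_root_.map_mul (aeval N), map_pow, aeval_X]
      rw [h2, hm, smul_smul]
      congr 1
      simp [eval_mul, eval_pow, pow_succ]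
      ring

private lemma map_aeval_matrix {R K : Type*} [CommRing R] [CommRing K] (φ : R →+* K) {n : ℕ}
    (M : Matrix (Fin n) (Fin n) R) (q : R[X]) :
    (aeval M q).map φ = aeval (M.map φ) (q.map φ) := by
  have h1 : (aeval M q).map φ = φ.mapMatrix (aeval M q) := rfl
  rw [h1, aeval_def, Polynomial.hom_eval₂, aeval_def, Polynomial.eval₂_map]
  congr 1
  ext r
  simp [Matrix.algebraMap_matrix_apply, RingHom.mapMatrix_apply, Matrix.map_apply,
    apply_ite φ]

private lemma eval_charpoly_det {K : Type*} [CommRing K] {n : ℕ}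
    (N : Matrix (Fin n) (Fin n) K) (r : K) :
    N.charpoly.eval r = (Matrix.scalar (Fin n) r - N).det := by
  rw [Matrix.charpoly, _root_.eval_det, matPolyEquiv_charmatrix]
  simp

/-- Over a commutative local ring `R`, a matrix whose characteristic polynomial is
`∏ᵢ (X − dᵢ)` with `dᵢ − dⱼ` a unit for all `i ≠ j` is conjugate to `diag(d₁, …, dₙ)`. -/
theorem diagonalizable_of_charpoly_unit_differences {R : Type*} [CommRing R] [IsLocalRing R]
    {n : ℕ} (d : Fin n → R) (hd : ∀ i j : Fin n, i ≠ j → IsUnit (d i - d j))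
    (M : Matrix (Fin n) (Fin n) R) (hM : M.charpoly = ∏ i : Fin n, (X - C (d i))) :
    ∃ γ : (Matrix (Fin n) (Fin n) R)ˣ,
      (↑γ⁻¹ : Matrix (Fin n) (Fin n) R) * M * (↑γ : Matrix (Fin n) (Fin n) R)
        = Matrix.diagonal d := by
  classical
  set K := IsLocalRing.ResidueField R with hK
  set φ : R →+* K := IsLocalRing.residue R with hφ
  set N : Matrix (Fin n) (Fin n) K := M.map φ with hN
  set p : Fin n → R[X] := fun i => ∏ j ∈ Finset.univ.erase i, (X - C (d j)) with hp
  have hfac : ∀ i, (X - C (d i)) * p i = M.charpoly := by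
    intro i
    rw [hM]
    exact Finset.mul_prod_erase Finset.univ (fun j => X - C (d j)) (Finset.mem_univ i)
  set A : Fin n → Matrix (Fin n) (Fin n) R := fun i => aeval M (p i) with hA
  -- eigen-relation over R
  have hMA : ∀ i, M * A i = d i • A i := by
    intro i
    have h0 : (M - d i • 1) * A i = 0 := by
      have hc := Matrix.aeval_self_charpoly M
      rw [← hfac i, _root_.map_mul (aeval M)] at hc
      have : aeval M (X - C (d i)) = M - d i • 1 := by
        simp [map_sub, aeval_X, aeval_C, Algebra.algebraMap_eq_smul_one]
      rwa [this] at hc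
    have h1 : M * A i - d i • A i = 0 := by
      rw [← h0, Matrix.sub_mul, Matrix.smul_mul, Matrix.one_mul]
    exact sub_eq_zero.mp h1
  -- the image of p i under φ, and nonvanishing of its eval at φ (d i)
  have hpmap : ∀ i, (p i).map φ = ∏ j ∈ Finset.univ.erase i, (X - C (φ (d j))) := by
    intro i
    rw [hp]
    simp [Polynomial.map_prod]
  have heval : ∀ i, ((p i).map φ).eval (φ (d i)) = ∏ j ∈ Finset.univ.erase i, (φ (d i) - φ (d j)) := by
    intro i; rw [hpmap i]; simp [eval_prod]
  have hunit : ∀ i, ((p i).map φ).eval (φ (d i)) ≠ 0 := by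
    intro i
    rw [heval i]
    apply Finset.prod_ne_zero_iff.mpr
    intro j hj
    have hij : j ≠ i := (Finset.mem_erase.mp hj).1
    have : IsUnit (d i - d j) := hd i j (Ne.symm hij)
    have := (IsLocalRing.residue_ne_zero_iff_isUnit _).mpr this
    rwa [map_sub] at this
  -- A i mod the maximal ideal is nonzero
  have hAne : ∀ i, (A i).map φ ≠ 0 := by
    intro i
    -- find an eigenvector of N for φ (d i)
    have hdet : (Matrix.scalar (Fin n) (φ (d i)) - N).det = 0 := by
      rw [← eval_charpoly_det, Matrix.charpoly_map, hM]
      rw [Polynomial.map_prod]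
      simp only [Polynomial.map_sub, map_X, map_C]
      rw [eval_prod]
      exact Finset.prod_eq_zero (Finset.mem_univ i) (by simp)
    obtain ⟨v, hv0, hv⟩ := (Matrix.exists_mulVec_eq_zero_iff).mpr hdet
    have hev : N *ᵥ v = φ (d i) • v := by
      rw [Matrix.sub_mulVec] at hv
      have h1 : Matrix.scalar (Fin n) (φ (d i)) *ᵥ v = φ (d i) • v := by
        funext x
        rw [Matrix.scalar_apply, Matrix.mulVec_diagonal]
        rfl
      rw [sub_eq_zero] at hv
      rw [← hv, h1]
    intro hzero
    have this := aeval_mulVec_eigen N v (φ (d i)) hev ((p i).map φ)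
    rw [← map_aeval_matrix] at this
    have hz2 : ((aeval M) (p i)).map (⇑φ) = 0 := hzero
    rw [hz2] at this
    simp only [Matrix.zero_mulVec] at this
    have := this.symm
    rw [smul_eq_zero] at this
    rcases this with h | h
    · exact hunit i h
    · exact hv0 h
  -- choose a column index where A i is nonzero mod m
  have hcol : ∀ i, ∃ k r0, φ (A i r0 k) ≠ 0 := by
    intro i
    by_contra hcon
    push_neg at hcon
    apply hAne i
    ext r k
    simpa using hcon k r
  choose k r0 hk using hcol
  set c : Fin n → Fin n → R := fun i r => A i r (k i) with hc
  -- eigen relation for columns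
  have hMc : ∀ i, M *ᵥ c i = d i • c i := by
    intro i
    have h1 : c i = (A i) *ᵥ Pi.single (k i) 1 := by
      funext r; simp [hc]
    rw [h1, Matrix.mulVec_mulVec, hMA i, Matrix.smul_mulVec]
  set cb : Fin n → Fin n → K := fun i r => φ (c i r) with hcb
  have hNc : ∀ i, N *ᵥ cb i = φ (d i) • cb i := by
    intro i
    funext r
    have := RingHom.map_mulVec φ M (c i) r
    rw [hMc i] at this
    simp only [Pi.smul_apply, smul_eq_mul, _root_.map_mul] at this
    simpa [hcb, hN, Function.comp_def] using this.symm
  have hcbne : ∀ i, cb i ≠ 0 := by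
    intro i h0
    apply hk i
    have := congrFun h0 (r0 i)
    simpa [hcb, hc] using this
  -- products A j * A i = 0 for i ≠ j
  have hAA : ∀ i j, i ≠ j → A j * A i = 0 := by
    intro i j hij
    have hjmem : j ∈ Finset.univ.erase i := Finset.mem_erase.mpr ⟨hij.symm, Finset.mem_univ j⟩
    have hpi : p i = (X - C (d j)) * ∏ l ∈ (Finset.univ.erase i).erase j, (X - C (d l)) :=
      (Finset.mul_prod_erase _ _ hjmem).symm
    have : p j * p i = M.charpoly * ∏ l ∈ (Finset.univ.erase i).erase j, (X - C (d l)) := by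
      rw [hpi, ← hfac j]; ring
    show aeval M (p j) * aeval M (p i) = 0
    rw [← _root_.map_mul (aeval M) (p j) (p i), this,
      _root_.map_mul (aeval M) M.charpoly _, Matrix.aeval_self_charpoly, zero_mul]
  -- the candidate conjugating matrix
  set γ : Matrix (Fin n) (Fin n) R := Matrix.of (fun r i => c i r) with hγ
  have hdetγ : IsUnit γ.det := by
    rw [← IsLocalRing.residue_ne_zero_iff_isUnit, ← hφ]
    have hmapdet : φ γ.det = (γ.map φ).det := by
      rw [← RingHom.mapMatrix_apply]
      exact RingHom.map_det φ γ
    rw [hmapdet]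
    intro hdz
    obtain ⟨g, hg0, hgv⟩ := (Matrix.exists_mulVec_eq_zero_iff).mpr hdz
    apply hg0
    funext j
    -- γ.map φ *ᵥ g = ∑ i, g i • cb i
    have hsum : (γ.map φ) *ᵥ g = ∑ i, g i • cb i := by
      funext r
      simp [Matrix.mulVec, dotProduct, hγ, hcb, Finset.sum_apply, mul_comm]
    -- apply (A j).map φ
    have happ : ((A j).map φ) *ᵥ ((γ.map φ) *ᵥ g) = 0 := by
      rw [hgv, Matrix.mulVec_zero]
    rw [hsum] at happ
    have hlin : ((A j).map φ) *ᵥ (∑ i, g i • cb i) = ∑ i, g i • (((A j).map φ) *ᵥ cb i) := by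
      rw [← Matrix.mulVecLin_apply, map_sum]
      congr 1; funext i
      rw [LinearMap.map_smul, Matrix.mulVecLin_apply]
    rw [hlin] at happ
    -- each term with i ≠ j vanishes
    have hterm : ∀ i, i ≠ j → ((A j).map φ) *ᵥ cb i = 0 := by
      intro i hij
      have h1 : cb i = (fun r => φ ((A i *ᵥ Pi.single (k i) 1) r)) := by
        funext r
        show φ (c i r) = _
        simp only [Matrix.mulVec_single_one, Matrix.col_apply]
        rfl
      rw [h1]
      funext r
      have h2 := RingHom.map_mulVec φ (A j) (A i *ᵥ Pi.single (k i) 1) r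
      rw [Matrix.mulVec_mulVec, hAA i j hij, Matrix.zero_mulVec, Pi.zero_apply,
        map_zero] at h2
      exact h2.symm
    have hj : ((A j).map φ) *ᵥ cb j = ((p j).map φ).eval (φ (d j)) • cb j := by
      rw [hA, map_aeval_matrix, ← hN]
      exact aeval_mulVec_eigen N (cb j) (φ (d j)) (hNc j) _
    rw [Finset.sum_eq_single j (fun i _ hij => by rw [hterm i hij, smul_zero])
      (fun h => absurd (Finset.mem_univ j) h)] at happ
    rw [hj, smul_smul] at happ
    rcases smul_eq_zero.mp happ with h | h
    · rcases mul_eq_zero.mp h with h' | h'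
      · exact h'
      · exact absurd h' (hunit j)
    · exact absurd h (hcbne j)
  obtain ⟨u, hu⟩ := (Matrix.isUnit_iff_isUnit_det γ).mpr hdetγ
  refine ⟨u, ?_⟩
  have hMγ : M * γ = γ * Matrix.diagonal d := by
    ext r i
    have h1 : (M * γ) r i = (M *ᵥ c i) r := rfl
    have h2 : (γ * Matrix.diagonal d) r i = c i r * d i := by
      rw [Matrix.mul_diagonal]; rfl
    rw [h1, h2, hMc i]
    show d i * c i r = c i r * d i
    ring
  calc (↑u⁻¹ : Matrix (Fin n) (Fin n) R) * M * ↑u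
      = ↑u⁻¹ * (M * γ) := by rw [hu, mul_assoc]
    _ = ↑u⁻¹ * (γ * Matrix.diagonal d) := by rw [hMγ]
    _ = (↑u⁻¹ * ↑u) * Matrix.diagonal d := by rw [hu, mul_assoc]
    _ = Matrix.diagonal d := by rw [u.inv_mul, one_mul]
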